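/- Let L = V ⊕ W be a color gLt-algebra admitting a quasi-multiplicative basis {e_i}_{i∈I} of W ≠ 0, and let i, h ∈ I with [i] ≠ [h]. Then ⟨𝔍_{[i]}, 𝔍_{[h]}, L, …, L⟩_σ = 0 for every σ ∈ Sₙ, where 𝔍_{[i]} = V_{[i]} ⊕ W_{[i]} and 𝔍_{[h]} = V_{[h]} ⊕ W_{[h]} are the color gLt-ideals associated to the connection classes [i] and [h]. -/

import Mathlib

set_option maxHeartbeats 1000000

/-- A (color) generalized Lie-type algebra: an `(n+2)`-ary `G`-graded algebra with
bicharacter `epsilon` satisfying the (colored) generalized Lie-type identities with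
structure constants `alpha` (allowed to depend on the degrees of the arguments). -/
structure ColorGLT (F : Type) [Field F] (G : Type) [AddCommGroup G] [DecidableEq G]
    (L : Type) [AddCommGroup L] [Module F L] (n : ℕ) where
  bracket : MultilinearMap F (fun _ : Fin (n + 2) => L) L
  grading : G → Submodule F L
  isInternal : DirectSum.IsInternal grading
  bracket_graded : ∀ (g : Fin (n + 2) → G) (x : Fin (n + 2) → L),
    (∀ t, x t ∈ grading (g t)) → bracket x ∈ grading (∑ t, g t)
  epsilon : G → G → F
  epsilon_ne_zero : ∀ g h, epsilon g h ≠ 0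
  epsilon_add_left : ∀ g h k, epsilon (g + h) k = epsilon g k * epsilon h k
  epsilon_add_right : ∀ g h k, epsilon k (g + h) = epsilon k g * epsilon k h
  epsilon_skew : ∀ g h, epsilon g h * epsilon h g = 1
  alpha : Fin (n + 2) → Fin (n + 2) → Fin (n + 2) → Equiv.Perm (Fin (n + 2)) →
      Equiv.Perm (Fin (n + 1)) → (Fin (n + 2) → G) → (Fin (n + 1) → G) → F
  glt : ∀ (k : Fin (n + 2)) (gx : Fin (n + 2) → G) (gy : Fin (n + 1) → G)
      (x : Fin (n + 2) → L) (y : Fin (n + 1) → L),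
      (∀ t, x t ∈ grading (gx t)) → (∀ t, y t ∈ grading (gy t)) →
      bracket (Fin.insertNth k (bracket x) y) =
        ∑ i : Fin (n + 2), ∑ j : Fin (n + 2), ∑ σ₁ : Equiv.Perm (Fin (n + 2)),
          ∑ σ₂ : Equiv.Perm (Fin (n + 1)),
            alpha i j k σ₁ σ₂ gx gy •
              bracket (Function.update (fun t => x (σ₁ t)) i
                (bracket (Fin.insertNth j (x (σ₁ i)) (fun t => y (σ₂ t)))))

namespace ColorGLT

variable {F : Type} [Field F] {G : Type} [AddCommGroup G] [DecidableEq G]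
    {L : Type} [AddCommGroup L] [Module F L] {n : ℕ}

/-- A color gLt-ideal: a graded subspace `S` with `⟨S, L, …, L⟩_σ ⊆ S` for all `σ ∈ Sₙ`. -/
def IsIdeal (A : ColorGLT F G L n) (S : Submodule F L) : Prop :=
  (S = ⨆ g : G, S ⊓ A.grading g) ∧
  ∀ (σ : Equiv.Perm (Fin (n + 2))) (x : Fin (n + 2) → L),
    x 0 ∈ S → A.bracket (fun t => x (σ t)) ∈ S

/-- `L` is centerless: `Z(L) = {x : ⟨x, L, …, L⟩_σ = 0 ∀ σ} = 0`. -/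
def Centerless (A : ColorGLT F G L n) : Prop :=
  ∀ x : L, (∀ (σ : Equiv.Perm (Fin (n + 2))) (y : Fin (n + 2) → L),
    y 0 = x → A.bracket (fun t => y (σ t)) = 0) → x = 0

end ColorGLT

/-- A quasi-multiplicative basis of a color gLt-algebra: `L = V ⊕ W`, with a homogeneous
basis `{e i}` of `W ≠ 0` satisfying the three quasi-multiplicativity conditions. -/
structure QMBasis {F : Type} [Field F] {G : Type} [AddCommGroup G] [DecidableEq G]
    {L : Type} [AddCommGroup L] [Module F L] {n : ℕ}
    (A : ColorGLT F G L n) (I : Type) where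
  V : Submodule F L
  W : Submodule F L
  compl : IsCompl V W
  W_ne_bot : W ≠ ⊥
  V_graded : V = ⨆ g : G, V ⊓ A.grading g
  W_graded : W = ⨆ g : G, W ⊓ A.grading g
  e : I → L
  deg : I → G
  e_homog : ∀ i, e i ∈ A.grading (deg i)
  e_indep : LinearIndependent F e
  e_span : Submodule.span F (Set.range e) = W
  qm1 : ∀ c : Fin (n + 2) → I,
    (∃ j, A.bracket (fun t => e (c t)) ∈ Submodule.span F {e j}) ∨
      A.bracket (fun t => e (c t)) ∈ V
  qm2 : ∀ (σ : Equiv.Perm (Fin (n + 2))) (S : Finset (Fin (n + 2))),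
    S.Nonempty → S ≠ Finset.univ → ∀ ind : Fin (n + 2) → I, ∃ j : I,
      ∀ x : Fin (n + 2) → L, (∀ t, t ∈ S → x t = e (ind t)) →
        (∀ t, t ∉ S → x t ∈ V) →
        A.bracket (fun t => x (σ t)) ∈ Submodule.span F {e j}
  qm3 : (∃ j, ∀ x : Fin (n + 2) → L, (∀ t, x t ∈ V) →
          A.bracket x ∈ Submodule.span F {e j}) ∨
        (∀ x : Fin (n + 2) → L, (∀ t, x t ∈ V) → A.bracket x ∈ V)

namespace QMBasis

variable {F : Type} [Field F] {G : Type} [AddCommGroup G] [DecidableEq G]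
    {L : Type} [AddCommGroup L] [Module F L] {n : ℕ} {I : Type}
    {A : ColorGLT F G L n}

/-- The set of elements represented by an index of `𝔉 = I ∪ {v}`: `e i` for `some i`,
the subspace `V` for `none` (= `v`). -/
def elemSet (B : QMBasis A I) : Option I → Set L
  | none => (B.V : Set L)
  | some i => {B.e i}

/-- The target set of an index of `𝔉`: the line `𝔽 e j` for `some j`, `V` for `v`. -/
def targetSet (B : QMBasis A I) : Option I → Set L
  | none => (B.V : Set L)
  | some j => (Submodule.span F {B.e j} : Set L)

/-- `x ∈ a_σ(c)`: the `σ`-permuted product of the elements represented by `c` is nonzero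
and lands in the target represented by `x`; the value `v` is only allowed for all-basis
or all-`V` tuples. -/
def aMem (B : QMBasis A I) (σ : Equiv.Perm (Fin (n + 2)))
    (c : Fin (n + 2) → Option I) (x : Option I) : Prop :=
  (∃ z : Fin (n + 2) → L, (∀ t, z t ∈ B.elemSet (c (σ t))) ∧ A.bracket z ≠ 0) ∧
  (∀ z : Fin (n + 2) → L, (∀ t, z t ∈ B.elemSet (c (σ t))) → A.bracket z ∈ B.targetSet x) ∧
  (x = none → ((∀ t, (c t).isSome = true) ∨ (∀ t, c t = none)))

/-- An admissible `(n+1)`-tuple over `𝔉 ∪ 𝔉̄`: all entries barred (`true`) or all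
unbarred (`false`). -/
abbrev Tup (I : Type) (n : ℕ) := Bool × (Fin (n + 1) → Option I)

/-- `x ∈ μ(j, X)` where `j ∈ 𝔉 ∪ 𝔉̄` (left = unbarred, right = barred) and `X` is an
admissible tuple; defined via `a_σ` and `b_σ` as in the paper. -/
def muMem (B : QMBasis A I) :
    Option I ⊕ Option I → Tup I n → Option I → Prop
  | Sum.inl j, (false, c), x => ∃ σ : Equiv.Perm (Fin (n + 2)), B.aMem σ (Fin.cons j c) x
  | Sum.inl j, (true, c), x => ∃ σ : Equiv.Perm (Fin (n + 2)), B.aMem σ (Fin.cons x c) j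
  | Sum.inr j, (false, c), x =>
      ∃ (k : Fin (n + 1)) (σ : Equiv.Perm (Fin (n + 2))),
        B.aMem σ (Fin.cons x (Fin.cons j (fun t => c (k.succAbove t)))) (c k)
  | Sum.inr _, (true, _), _ => False

/-- The map `φ : P(I ∪ Ī) × T → P(I ∪ Ī)`, `φ(J, X) = K ∪ K̄` with
`K = (⋃_{j ∈ J} μ(j, X)) \ {v}` (left = `I`, right = `Ī`). -/
def phi (B : QMBasis A I) (J : Set (I ⊕ I)) (X : Tup I n) : Set (I ⊕ I) :=
  {p | ∃ i : I, (p = Sum.inl i ∨ p = Sum.inr i) ∧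
    ∃ j ∈ J, B.muMem (Sum.map some some j) X (some i)}

/-- Iterated application of `φ` along a list of tuples. -/
def chain (B : QMBasis A I) : Set (I ⊕ I) → List (Tup I n) → Set (I ⊕ I)
  | s, [] => s
  | s, X :: r => chain B (B.phi s X) r

/-- The connection relation: `i` is connected to `j`. -/
def Connected (B : QMBasis A I) (i j : I) : Prop :=
  i = j ∨ ∃ (Xs : List (Tup I n)) (st : I ⊕ I),
    Xs ≠ [] ∧ (st = Sum.inl i ∨ st = Sum.inr i) ∧
    (∀ m, m < Xs.length → (chain B {st} (List.take m Xs)).Nonempty) ∧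
    Sum.inl j ∈ chain B {st} Xs

/-- The connection class `[i]` of `i`. -/
def cls (B : QMBasis A I) (i : I) : Set I := {j | B.Connected i j}

/-- `W_{[i]} = ⊕_{j ∈ [i]} 𝔽 e_j`. -/
def Wcls (B : QMBasis A I) (i : I) : Submodule F L :=
  Submodule.span F (B.e '' B.cls i)

/-- `V_{[i]} = (Σ_{i₁,…,iₙ ∈ [i]} 𝔽⟨e_{i₁},…,e_{iₙ}⟩) ∩ V`. -/
def Vcls (B : QMBasis A I) (i : I) : Submodule F L :=
  Submodule.span F {z : L | ∃ c : Fin (n + 2) → I,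
    (∀ t, c t ∈ B.cls i) ∧ z = A.bracket (fun t => B.e (c t))} ⊓ B.V

/-- `𝔍_{[i]} = V_{[i]} ⊕ W_{[i]}`. -/
def Jcls (B : QMBasis A I) (i : I) : Submodule F L := B.Vcls i ⊔ B.Wcls i

/-- `S` admits a quasi-multiplicative basis inherited from that of `L`:
`S = V_S ⊕ W_S` with `V_S ⊆ V` and `W_S ≠ 0` spanned by a subset of the `e i`. -/
def HasInheritedBasis (B : QMBasis A I) (S : Submodule F L) : Prop :=
  ∃ (V' : Submodule F L) (J' : Set I), V' ≤ B.V ∧ J'.Nonempty ∧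
    S = V' ⊔ Submodule.span F (B.e '' J')

/-- `V` is tight: `V = 0` or `V = Σ_{μ(i₁,…,iₙ) = {v}} 𝔽⟨e_{i₁},…,e_{iₙ}⟩`. -/
def Tight (B : QMBasis A I) : Prop :=
  B.V = ⊥ ∨
    B.V = Submodule.span F {z : L | ∃ c : Fin (n + 2) → I,
      ({x : Option I | ∃ σ, B.aMem σ (fun t => some (c t)) x} = {none}) ∧
      z = A.bracket (fun t => B.e (c t))}

/-- The set of elements represented by `u_{k}`: `u_k = e_k + e_{k̄}` (`= e` of the
underlying index, since `e_{j̄} = 0`) if `k ∉ {v, v̄}`, and `u_k = V` otherwise. -/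
def uSet (B : QMBasis A I) : Option I ⊕ Option I → Set L
  | Sum.inl none => (B.V : Set L)
  | Sum.inr none => (B.V : Set L)
  | Sum.inl (some i) => {B.e i}
  | Sum.inr (some i) => {B.e i}

/-- The full `(n+2)`-tuple `(k₁, …, kₙ)` over `𝔉 ∪ 𝔉̄` obtained from a first entry and
an admissible tuple. -/
def fullTup {I : Type} {n : ℕ} (k₁ : Option I ⊕ Option I) (X : Tup I n) :
    Fin (n + 2) → Option I ⊕ Option I :=
  Fin.cons k₁ (fun t => if X.1 then Sum.inr (X.2 t) else Sum.inl (X.2 t))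

/-- The basis is `μ`-quasi-multiplicative: whenever `i ∈ μ(k₁, …, kₙ)` then
`e i ∈ 𝔽⟨u_{k₁}, …, u_{kₙ}⟩_σ` for some `σ ∈ Sₙ`. -/
def MuQM (B : QMBasis A I) : Prop :=
  ∀ (k₁ : Option I ⊕ Option I) (X : Tup I n) (i : I),
    B.muMem k₁ X (some i) →
    ∃ (σ : Equiv.Perm (Fin (n + 2))) (z : Fin (n + 2) → L),
      (∀ t, z t ∈ B.uSet (fullTup k₁ X (σ t))) ∧
      B.e i ∈ Submodule.span F {A.bracket z}

end QMBasis


namespace QMBasis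

variable {F : Type} [Field F] {G : Type} [AddCommGroup G] [DecidableEq G]
    {L : Type} [AddCommGroup L] [Module F L] {n : ℕ} {I : Type}
    {A : ColorGLT F G L n} (B : QMBasis A I)

lemma e_ne_zero (j : I) : B.e j ≠ 0 := B.e_indep.ne_zero j

lemma e_mem_W (j : I) : B.e j ∈ B.W := B.e_span ▸ Submodule.subset_span ⟨j, rfl⟩

lemma e_not_mem_V (j : I) : B.e j ∉ B.V := fun hv =>
  B.e_ne_zero j (Submodule.disjoint_def.mp B.compl.disjoint _ hv (B.e_mem_W j))

lemma e_inj : Function.Injective B.e := B.e_indep.injective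

lemma code_eq {x : L} {o : Option I} (hx : x ∈ B.elemSet o) {j : I}
    (hxe : x = B.e j) : o = some j := by
  cases o with
  | none => exact absurd (hxe ▸ hx) (B.e_not_mem_V j)
  | some m =>
    rw [hxe] at hx
    exact congrArg some (B.e_inj (Set.mem_singleton_iff.mp hx)).symm

lemma aMem_comp {c : Fin (n + 2) → Option I} {x : Option I}
    (π : Equiv.Perm (Fin (n + 2))) (h : ∃ σ, B.aMem σ c x) :
    ∃ σ, B.aMem σ (c ∘ ⇑π) x := by
  obtain ⟨σ, ⟨z, hz, hz0⟩, h2, h3⟩ := h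
  refine ⟨π⁻¹ * σ, ⟨z, fun t => by simpa using hz t, hz0⟩, ?_, ?_⟩
  · intro z' hz'
    refine h2 z' fun t => ?_
    have := hz' t
    simpa using this
  · intro hx
    rcases h3 hx with h | h
    · exact Or.inl fun t => h (π t)
    · exact Or.inr fun t => h (π t)

lemma cons_cycle {β : Type*} {m : ℕ} (c : Fin (m + 1) → β) (a : Fin (m + 1)) :
    (Fin.cons (c a) (fun t => c (a.succAbove t)) : Fin (m + 1) → β)
      = c ∘ ⇑(a.cycleRange.symm) := by
  funext t
  induction t using Fin.cases with
  | zero => simp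
  | succ s => simp [Fin.cycleRange_symm_succ]

lemma cons_comp_decompose {β : Type*} {m : ℕ} (v : β) (g : Fin (m + 1) → β)
    (e : Equiv.Perm (Fin (m + 1))) :
    (Fin.cons v (g ∘ ⇑e) : Fin (m + 2) → β)
      = (Fin.cons v g) ∘ ⇑(Equiv.Perm.decomposeFin.symm (0, e)) := by
  funext t
  induction t using Fin.cases with
  | zero => simp
  | succ s => simp [Equiv.Perm.decomposeFin_symm_apply_succ]

lemma cons_cons_swap {β : Type*} {m : ℕ} (x y : β) (g : Fin m → β) :
    (Fin.cons x (Fin.cons y g) : Fin (m + 2) → β)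
      = (Fin.cons y (Fin.cons x g)) ∘ ⇑(Equiv.swap (0 : Fin (m + 2)) 1) := by
  funext t
  induction t using Fin.cases with
  | zero =>
    rw [Function.comp_apply, Equiv.swap_apply_left, Fin.cons_zero,
      ← Fin.succ_zero_eq_one, Fin.cons_succ, Fin.cons_zero]
  | succ s =>
    induction s using Fin.cases with
    | zero =>
      rw [Function.comp_apply, Fin.succ_zero_eq_one, Equiv.swap_apply_right,
        Fin.cons_zero, ← Fin.succ_zero_eq_one, Fin.cons_succ, Fin.cons_zero]
    | succ r =>
      rw [Function.comp_apply,
        Equiv.swap_apply_of_ne_of_ne (Fin.succ_ne_zero _)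
          (by rw [← Fin.succ_zero_eq_one]; exact fun hh =>
            Fin.succ_ne_zero r (Fin.succ_injective _ hh)),
        Fin.cons_succ, Fin.cons_succ, Fin.cons_succ, Fin.cons_succ]

end QMBasis

namespace QMBasis

variable {F : Type} [Field F] {G : Type} [AddCommGroup G] [DecidableEq G]
    {L : Type} [AddCommGroup L] [Module F L] {n : ℕ} {I : Type}
    {A : ColorGLT F G L n} (B : QMBasis A I)

/-- The underlying index of an element of `I ⊕ I`. -/
def idx : I ⊕ I → I := Sum.elim id id

/-- Step-by-step paths through `φ`. -/
def Path (B : QMBasis A I) : (I ⊕ I) → List (Tup I n) → (I ⊕ I) → Prop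
  | p, [], q => q = p
  | p, X :: r, q => ∃ p', p' ∈ B.phi {p} X ∧ B.Path p' r q

lemma mem_phi_iff {J : Set (I ⊕ I)} {X : Tup I n} {q : I ⊕ I} :
    q ∈ B.phi J X ↔ ∃ i : I, (q = Sum.inl i ∨ q = Sum.inr i) ∧
      ∃ j ∈ J, B.muMem (Sum.map some some j) X (some i) := Iff.rfl

lemma inl_mem_phi_iff {J : Set (I ⊕ I)} {X : Tup I n} {u : I} :
    Sum.inl u ∈ B.phi J X ↔ ∃ j ∈ J, B.muMem (Sum.map some some j) X (some u) := by
  rw [mem_phi_iff]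
  constructor
  · rintro ⟨i0, (hi | hi), hmu⟩
    · obtain rfl : u = i0 := Sum.inl.inj hi
      exact hmu
    · exact absurd hi (by simp)
  · intro hmu
    exact ⟨u, Or.inl rfl, hmu⟩

lemma inr_mem_phi_iff {J : Set (I ⊕ I)} {X : Tup I n} {u : I} :
    Sum.inr u ∈ B.phi J X ↔ ∃ j ∈ J, B.muMem (Sum.map some some j) X (some u) := by
  rw [mem_phi_iff]
  constructor
  · rintro ⟨i0, (hi | hi), hmu⟩
    · exact absurd hi (by simp)
    · obtain rfl : u = i0 := Sum.inr.inj hi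
      exact hmu
  · intro hmu
    exact ⟨u, Or.inr rfl, hmu⟩

lemma phi_mono {J J' : Set (I ⊕ I)} (h : J ⊆ J') (X : Tup I n) :
    B.phi J X ⊆ B.phi J' X := by
  rintro q ⟨i0, hi0, j, hj, hmu⟩
  exact ⟨i0, hi0, j, h hj, hmu⟩

lemma mem_phi_decompose {J : Set (I ⊕ I)} {X : Tup I n} {q : I ⊕ I} :
    q ∈ B.phi J X ↔ ∃ p ∈ J, q ∈ B.phi {p} X := by
  constructor
  · rintro ⟨i0, hi0, j, hj, hmu⟩
    exact ⟨j, hj, ⟨i0, hi0, j, rfl, hmu⟩⟩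
  · rintro ⟨p, hp, hq⟩
    exact B.phi_mono (by simpa using hp) X hq

lemma mem_chain_iff_path {Xs : List (Tup I n)} :
    ∀ {s : Set (I ⊕ I)} {q : I ⊕ I},
      q ∈ B.chain s Xs ↔ ∃ p ∈ s, B.Path p Xs q := by
  induction Xs with
  | nil =>
    intro s q
    constructor
    · intro hq; exact ⟨q, hq, rfl⟩
    · rintro ⟨p, hp, rfl⟩; exact hp
  | cons X r ih =>
    intro s q
    constructor
    · intro hq
      obtain ⟨p', hp', hpath⟩ := ih.mp hq
      obtain ⟨p, hp, hp'2⟩ := B.mem_phi_decompose.mp hp'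
      exact ⟨p, hp, p', hp'2, hpath⟩
    · rintro ⟨p, hp, p', hp', hpath⟩
      exact ih.mpr ⟨p', B.phi_mono (by simpa using hp) X hp', hpath⟩

lemma path_append {Xs Ys : List (Tup I n)} :
    ∀ {p q r : I ⊕ I}, B.Path p Xs q → B.Path q Ys r → B.Path p (Xs ++ Ys) r := by
  induction Xs with
  | nil =>
    intro p q r h1 h2
    obtain rfl : q = p := h1
    exact h2
  | cons X rest ih =>
    rintro p q r ⟨p', hp', hpath⟩ h2
    exact ⟨p', hp', ih hpath h2⟩

lemma path_take {Xs : List (Tup I n)} :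
    ∀ {p q : I ⊕ I}, B.Path p Xs q → ∀ m : ℕ, ∃ q', B.Path p (Xs.take m) q' := by
  induction Xs with
  | nil => intro p q _ m; exact ⟨p, by simp [Path]⟩
  | cons X rest ih =>
    rintro p q ⟨p', hp', hpath⟩ m
    cases m with
    | zero => exact ⟨p, rfl⟩
    | succ m =>
      obtain ⟨q', hq'⟩ := ih hpath m
      exact ⟨q', p', hp', hq'⟩

lemma path_bar {Xs : List (Tup I n)} (hXs : Xs ≠ []) {p : I ⊕ I} {u : I} :
    B.Path p Xs (Sum.inl u) ↔ B.Path p Xs (Sum.inr u) := by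
  induction Xs generalizing p with
  | nil => exact absurd rfl hXs
  | cons X r ih =>
    cases r with
    | nil =>
      constructor
      · rintro ⟨p', hp', hp2⟩
        obtain rfl : Sum.inl u = p' := hp2
        exact ⟨Sum.inr u, B.inr_mem_phi_iff.mpr (B.inl_mem_phi_iff.mp hp'), rfl⟩
      · rintro ⟨p', hp', hp2⟩
        obtain rfl : Sum.inr u = p' := hp2
        exact ⟨Sum.inl u, B.inl_mem_phi_iff.mpr (B.inr_mem_phi_iff.mp hp'), rfl⟩
    | cons Y r' =>
      constructor
      · rintro ⟨p', hp', hpath⟩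
        exact ⟨p', hp', (ih (by simp)).mp hpath⟩
      · rintro ⟨p', hp', hpath⟩
        exact ⟨p', hp', (ih (by simp)).mpr hpath⟩

end QMBasis

namespace QMBasis

variable {F : Type} [Field F] {G : Type} [AddCommGroup G] [DecidableEq G]
    {L : Type} [AddCommGroup L] [Module F L] {n : ℕ} {I : Type}
    {A : ColorGLT F G L n} (B : QMBasis A I)

lemma step_rev {p : I ⊕ I} {X : Tup I n} {v : I}
    (h : B.muMem (Sum.map some some p) X (some v)) :
    ∃ (X' : Tup I n) (r : I ⊕ I), (r = Sum.inl v ∨ r = Sum.inr v) ∧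
      Sum.inl (idx p) ∈ B.phi {r} X' ∧ Sum.inr (idx p) ∈ B.phi {r} X' := by
  obtain ⟨bb, c⟩ := X
  rcases p with a | a
  · cases bb
    · -- forward unbarred: reverse with barred tuple
      refine ⟨(true, c), Sum.inl v, Or.inl rfl, ?_, ?_⟩
      · exact B.inl_mem_phi_iff.mpr ⟨Sum.inl v, rfl, h⟩
      · exact B.inr_mem_phi_iff.mpr ⟨Sum.inl v, rfl, h⟩
    · refine ⟨(false, c), Sum.inl v, Or.inl rfl, ?_, ?_⟩
      · exact B.inl_mem_phi_iff.mpr ⟨Sum.inl v, rfl, h⟩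
      · exact B.inr_mem_phi_iff.mpr ⟨Sum.inl v, rfl, h⟩
  · cases bb
    · obtain ⟨k0, hk⟩ := h
      have hmu : B.muMem (Sum.inr (some v)) (false, c) (some a) := by
        refine ⟨k0, ?_⟩
        rw [cons_cons_swap (some a) (some v) (fun t => c (k0.succAbove t))]
        exact B.aMem_comp _ hk
      exact ⟨(false, c), Sum.inr v, Or.inr rfl,
        B.inl_mem_phi_iff.mpr ⟨Sum.inr v, rfl, hmu⟩,
        B.inr_mem_phi_iff.mpr ⟨Sum.inr v, rfl, hmu⟩⟩
    · exact absurd h (fun hh => hh)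

lemma path_rev {Xs : List (Tup I n)} :
    ∀ {p q : I ⊕ I}, B.Path p Xs q →
      ∃ Ys : List (Tup I n), Ys.length = Xs.length ∧
        ∀ p'', (p'' = Sum.inl (idx p) ∨ p'' = Sum.inr (idx p)) →
          ∃ r, (r = Sum.inl (idx q) ∨ r = Sum.inr (idx q)) ∧ B.Path r Ys p'' := by
  induction Xs with
  | nil =>
    intro p q h
    obtain rfl : q = p := h
    exact ⟨[], rfl, fun p'' hp'' => ⟨p'', hp'', rfl⟩⟩
  | cons X rest ih =>
    rintro p q ⟨p', hφ, hpath⟩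
    obtain ⟨Ys, hlen, hrev⟩ := ih hpath
    obtain ⟨i0, hi0, j, hj, hmu⟩ := B.mem_phi_iff.mp hφ
    obtain rfl : j = p := by simpa using hj
    have hidx : idx p' = i0 := by rcases hi0 with h' | h' <;> (subst h'; rfl)
    obtain ⟨X', r', hr', hinl, hinr⟩ := B.step_rev hmu
    obtain ⟨r, hr, hpathYs⟩ := hrev r' (by rw [hidx]; exact hr')
    refine ⟨Ys ++ [X'], by simp [hlen], fun p'' hp'' => ⟨r, hr, ?_⟩⟩
    have hstep : p'' ∈ B.phi {r'} X' := by
      rcases hp'' with h' | h' <;> subst h'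
      · exact hinl
      · exact hinr
    exact B.path_append hpathYs ⟨p'', hstep, rfl⟩

lemma connected_iff {u v : I} :
    B.Connected u v ↔ u = v ∨ ∃ (Xs : List (Tup I n)) (st : I ⊕ I), Xs ≠ [] ∧
      (st = Sum.inl u ∨ st = Sum.inr u) ∧ B.Path st Xs (Sum.inl v) := by
  constructor
  · rintro (h | ⟨Xs, st, h1, h2, _, h4⟩)
    · exact Or.inl h
    · obtain ⟨p, hp, hpath⟩ := B.mem_chain_iff_path.mp h4
      obtain rfl : p = st := by simpa using hp
      exact Or.inr ⟨Xs, p, h1, h2, hpath⟩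
  · rintro (h | ⟨Xs, st, h1, h2, h3⟩)
    · exact Or.inl h
    · refine Or.inr ⟨Xs, st, h1, h2, ?_, ?_⟩
      · intro m _
        obtain ⟨q', hq'⟩ := B.path_take h3 m
        exact ⟨q', B.mem_chain_iff_path.mpr ⟨st, rfl, hq'⟩⟩
      · exact B.mem_chain_iff_path.mpr ⟨st, rfl, h3⟩

lemma connected_refl (u : I) : B.Connected u u := Or.inl rfl

lemma connected_symm {u v : I} (h : B.Connected u v) : B.Connected v u := by
  rcases B.connected_iff.mp h with rfl | ⟨Xs, st, h1, h2, h3⟩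
  · exact B.connected_refl u
  · obtain ⟨Ys, hlen, hrev⟩ := B.path_rev h3
    have hidx : idx st = u := by rcases h2 with h' | h' <;> (subst h'; rfl)
    obtain ⟨r, hr, hpath⟩ := hrev (Sum.inl u) (Or.inl (by rw [hidx]))
    refine B.connected_iff.mpr (Or.inr ⟨Ys, r, ?_, ?_, hpath⟩)
    · intro hYs
      refine h1 (List.length_eq_zero_iff.mp ?_)
      rw [← hlen, hYs]
      rfl
    · exact hr

lemma connected_trans {u v w : I} (h1 : B.Connected u v) (h2 : B.Connected v w) :
    B.Connected u w := by
  rcases B.connected_iff.mp h1 with rfl | ⟨Xs, st, hx1, hx2, hx3⟩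
  · exact h2
  rcases B.connected_iff.mp h2 with rfl | ⟨Ys, st', hy1, hy2, hy3⟩
  · exact h1
  have hmid : B.Path st Xs st' := by
    rcases hy2 with h' | h' <;> subst h'
    · exact hx3
    · exact (B.path_bar hx1).mp hx3
  exact B.connected_iff.mpr (Or.inr ⟨Xs ++ Ys, st, by simp [hx1], hx2,
    B.path_append hmid hy3⟩)

lemma cls_eq_of_connected {u v : I} (h : B.Connected u v) : B.cls u = B.cls v :=
  Set.ext fun x => ⟨fun hx => B.connected_trans (B.connected_symm h) hx,
    fun hx => B.connected_trans h hx⟩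

end QMBasis

namespace QMBasis

variable {F : Type} [Field F] {G : Type} [AddCommGroup G] [DecidableEq G]
    {L : Type} [AddCommGroup L] [Module F L] {n : ℕ} {I : Type}
    {A : ColorGLT F G L n} (B : QMBasis A I)

lemma conn_of_target {C : Fin (n + 2) → Option I} {m j : I} {a : Fin (n + 2)}
    (hCa : C a = some j) (h : ∃ σ, B.aMem σ C (some m)) : B.Connected j m := by
  have hD : (Fin.cons (some j) (fun t => C (a.succAbove t)) : Fin (n + 2) → Option I)
      = C ∘ ⇑(a.cycleRange.symm) := by
    rw [← hCa]; exact cons_cycle C a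
  have h' : ∃ σ, B.aMem σ (Fin.cons (some j) (fun t => C (a.succAbove t))) (some m) := by
    rw [hD]; exact B.aMem_comp _ h
  refine B.connected_iff.mpr (Or.inr
    ⟨[(false, fun t => C (a.succAbove t))], Sum.inl j, by simp, Or.inl rfl, ?_⟩)
  exact ⟨Sum.inl m, B.inl_mem_phi_iff.mpr ⟨Sum.inl j, rfl, h'⟩, rfl⟩

lemma conn_of_none {C : Fin (n + 2) → Option I} {a b : Fin (n + 2)} (hab : a ≠ b)
    {j k : I} (hCa : C a = some j) (hCb : C b = some k)
    (h : ∃ σ, B.aMem σ C none) : B.Connected k j := by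
  obtain ⟨b', hb'⟩ := Fin.exists_succAbove_eq hab.symm
  set d : Fin (n + 1) → Option I := fun t => C (a.succAbove t) with hd
  set rest : Fin n → Option I := fun t => d (b'.succAbove t) with hrest
  have hdb' : d b' = some k := by rw [hd]; simp only [hb', hCb]
  have hD : (Fin.cons (some j) (Fin.cons (some k) rest) : Fin (n + 2) → Option I)
      = C ∘ (⇑(a.cycleRange.symm) ∘ ⇑(Equiv.Perm.decomposeFin.symm (0, b'.cycleRange.symm))) := by
    have e1 : (Fin.cons (some k) rest : Fin (n + 1) → Option I)
        = d ∘ ⇑(b'.cycleRange.symm) := by rw [← hdb']; exact cons_cycle d b'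
    rw [e1, ← hCa, cons_comp_decompose (C a) d b'.cycleRange.symm,
      cons_cycle C a]
    rfl
  have h' : ∃ σ, B.aMem σ (Fin.cons (some j) (Fin.cons (some k) rest)) none := by
    rw [hD]
    exact B.aMem_comp ((Equiv.Perm.decomposeFin.symm (0, b'.cycleRange.symm)).trans
      (a.cycleRange.symm)) h
  have hmu : B.muMem (Sum.inr (some k)) (false, Fin.cons none rest) (some j) := by
    refine ⟨0, ?_⟩
    simp only [Fin.cons_zero, Fin.zero_succAbove, Fin.cons_succ]
    exact h'
  refine B.connected_iff.mpr (Or.inr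
    ⟨[(false, Fin.cons none rest)], Sum.inr k, by simp, Or.inr rfl, ?_⟩)
  exact ⟨Sum.inl j, B.inl_mem_phi_iff.mpr ⟨Sum.inr k, rfl, hmu⟩, rfl⟩

/-- Core lemma: a product of basis/`V`-elements containing basis elements from two
different connection classes vanishes. -/
lemma LB {u w : I} (huw : B.cls u ≠ B.cls w) {c : Fin (n + 2) → Option I}
    {z : Fin (n + 2) → L} (hz : ∀ t, z t ∈ B.elemSet (c t))
    {a b : Fin (n + 2)} (hab : a ≠ b) {j k : I}
    (hca : c a = some j) (hcb : c b = some k)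
    (hj : B.Connected u j) (hk : B.Connected w k) : A.bracket z = 0 := by
  classical
  by_contra hz0
  by_cases hall : ∀ t, (c t).isSome
  · choose ind hind using fun t => Option.isSome_iff_exists.mp (hall t)
    have hzz : ∀ t, z t = B.e (ind t) := fun t => by
      have h' := hz t; rw [hind t] at h'; exact h'
    have hze : z = fun t => B.e (ind t) := funext hzz
    have forced : ∀ z' : Fin (n + 2) → L,
        (∀ t, z' t ∈ B.elemSet (c ((1 : Equiv.Perm (Fin (n + 2))) t))) →
        z' = fun t => B.e (ind t) := by
      intro z' hz'
      funext t
      have h' := hz' t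
      simp only [Equiv.Perm.coe_one, id_eq] at h'
      rw [hind t] at h'
      exact h'
    rcases B.qm1 ind with ⟨m, hm⟩ | hV
    · have ham : ∃ σ, B.aMem σ c (some m) := by
        refine ⟨1, ⟨z, fun t => by simpa using hz t, hz0⟩, ?_, by simp⟩
        intro z' hz'
        rw [forced z' hz']
        exact hm
      exact huw (((B.cls_eq_of_connected hj).trans
        (B.cls_eq_of_connected (B.conn_of_target hca ham))).trans
        ((B.cls_eq_of_connected hk).trans
          (B.cls_eq_of_connected (B.conn_of_target hcb ham))).symm)
    · have ham : ∃ σ, B.aMem σ c none := by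
        refine ⟨1, ⟨z, fun t => by simpa using hz t, hz0⟩, ?_, fun _ => Or.inl hall⟩
        intro z' hz'
        rw [forced z' hz']
        exact hV
      have h1 := B.conn_of_none hab hca hcb ham
      exact huw ((B.cls_eq_of_connected hj).trans
        (((B.cls_eq_of_connected hk).trans (B.cls_eq_of_connected h1)).symm))
  · push_neg at hall
    obtain ⟨t0, ht0⟩ := hall
    have ht0' : c t0 = none := Option.not_isSome_iff_eq_none.mp ht0
    set S : Finset (Fin (n + 2)) := Finset.univ.filter (fun t => (c t).isSome) with hS
    have haS : a ∈ S := by simp [hS, hca]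
    have hSne : S.Nonempty := ⟨a, haS⟩
    have hSneq : S ≠ Finset.univ := by
      intro hSu
      have : t0 ∈ S := hSu ▸ Finset.mem_univ t0
      simp [hS, ht0'] at this
    obtain ⟨m, hm⟩ := B.qm2 1 S hSne hSneq (fun t => (c t).getD j)
    have hforced : ∀ z' : Fin (n + 2) → L, (∀ t, z' t ∈ B.elemSet (c t)) →
        A.bracket z' ∈ Submodule.span F {B.e m} := by
      intro z' hz'
      have h' := hm z' ?_ ?_
      · simpa using h'
      · intro t htS
        have hsome : (c t).isSome := by simpa [hS] using htS
        obtain ⟨x, hx⟩ := Option.isSome_iff_exists.mp hsome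
        have h'' := hz' t
        rw [hx] at h''
        rw [hx]
        exact h''
      · intro t htS
        have hnone : c t = none :=
          Option.not_isSome_iff_eq_none.mp (by simpa [hS] using htS)
        have h'' := hz' t
        rw [hnone] at h''
        exact h''
    have ham : ∃ σ, B.aMem σ c (some m) := by
      refine ⟨1, ⟨z, fun t => by simpa using hz t, hz0⟩, ?_, by simp⟩
      intro z' hz'
      exact hforced z' (fun t => by simpa using hz' t)
    exact huw (((B.cls_eq_of_connected hj).trans
      (B.cls_eq_of_connected (B.conn_of_target hca ham))).trans
      ((B.cls_eq_of_connected hk).trans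
        (B.cls_eq_of_connected (B.conn_of_target hcb ham))).symm)

end QMBasis

namespace QMBasis

variable {F : Type} [Field F] {G : Type} [AddCommGroup G] [DecidableEq G]
    {L : Type} [AddCommGroup L] [Module F L] {n : ℕ} {I : Type}
    {A : ColorGLT F G L n} (B : QMBasis A I)

/-- Homogeneous elements that are either in `V` or basis elements. -/
def HomogElem (B : QMBasis A I) (x : L) : Prop :=
  (∃ g, x ∈ A.grading g) ∧ (x ∈ B.V ∨ ∃ m, x = B.e m)

lemma elem_code {x : L} (hx : x ∈ B.V ∨ ∃ m, x = B.e m) :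
    ∃ o : Option I, x ∈ B.elemSet o := by
  rcases hx with hx | ⟨m, rfl⟩
  · exact ⟨none, hx⟩
  · exact ⟨some m, rfl⟩

lemma multi_zero (f : MultilinearMap F (fun _ : Fin (n + 2) => L) L)
    (s : Fin (n + 2) → Set L)
    (h : ∀ z : Fin (n + 2) → L, (∀ t, z t ∈ s t) → f z = 0) :
    ∀ y : Fin (n + 2) → L, (∀ t, y t ∈ Submodule.span F (s t)) → f y = 0 := by
  classical
  suffices H : ∀ T : Finset (Fin (n + 2)), ∀ y : Fin (n + 2) → L,
      (∀ t ∈ T, y t ∈ Submodule.span F (s t)) → (∀ t ∉ T, y t ∈ s t) → f y = 0 by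
    intro y hy
    exact H Finset.univ y (fun t _ => hy t) (fun t ht => absurd (Finset.mem_univ t) ht)
  intro T
  induction T using Finset.induction with
  | empty =>
    intro y _ hy2
    exact h y (fun t => hy2 t (Finset.notMem_empty t))
  | @insert a T ha ih =>
    intro y hy1 hy2
    have hya : y a ∈ Submodule.span F (s a) := hy1 a (Finset.mem_insert_self a T)
    have key : ∀ v ∈ Submodule.span F (s a), f (Function.update y a v) = 0 := by
      intro v hv
      induction hv using Submodule.span_induction with
      | mem x hx =>
        apply ih
        · intro t ht
          have hta : t ≠ a := fun hta => ha (hta ▸ ht)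
          rw [Function.update_of_ne hta]
          exact hy1 t (Finset.mem_insert_of_mem ht)
        · intro t ht
          by_cases hta : t = a
          · subst hta; rw [Function.update_self]; exact hx
          · rw [Function.update_of_ne hta]
            exact hy2 t (by simp [Finset.mem_insert, hta, ht])
      | zero => exact f.map_coord_zero a (Function.update_self a 0 y)
      | add x y' _ _ hx0 hy0 => rw [f.map_update_add, hx0, hy0, add_zero]
      | smul r x _ hx0 => rw [f.map_update_smul, hx0, smul_zero]
    have := key (y a) hya
    rwa [Function.update_eq_self] at this

/-- Spanning set for `𝔍_{[u]}`. -/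
def TS (B : QMBasis A I) (u : I) : Set L :=
  (B.e '' B.cls u) ∪
    {z | (∃ c : Fin (n + 2) → I, (∀ t, c t ∈ B.cls u) ∧
      z = A.bracket (fun t => B.e (c t))) ∧ z ∈ B.V}

lemma Jcls_le_span (u : I) : B.Jcls u ≤ Submodule.span F (B.TS u) := by
  apply sup_le
  · refine le_trans inf_le_left (Submodule.span_le.mpr ?_)
    rintro z ⟨c, hc, rfl⟩
    by_cases hzV : A.bracket (fun t => B.e (c t)) ∈ B.V
    · exact Submodule.subset_span (Or.inr ⟨⟨c, hc, rfl⟩, hzV⟩)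
    · rcases B.qm1 c with ⟨m, hm⟩ | hV
      · rcases Submodule.mem_span_singleton.mp hm with ⟨r, hr⟩
        by_cases hr0 : r = 0
        · rw [← hr, hr0, zero_smul]
          exact Submodule.zero_mem _
        · have hb0 : A.bracket (fun t => B.e (c t)) ≠ 0 := by
            rw [← hr]; exact smul_ne_zero hr0 (B.e_ne_zero m)
          have ham : ∃ σ, B.aMem σ (fun t => some (c t)) (some m) := by
            refine ⟨1, ⟨fun t => B.e (c t), fun t => by simp [elemSet], hb0⟩, ?_, by simp⟩
            intro z' hz'
            have : z' = fun t => B.e (c t) := funext fun t => by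
              have h' := hz' t
              simpa [elemSet] using h'
            rw [this]
            exact hm
          have hconn := B.conn_of_target (C := fun t => some (c t)) (a := 0) rfl ham
          have hm_cls : m ∈ B.cls u := B.connected_trans (hc 0) hconn
          rw [← hr]
          exact Submodule.smul_mem _ r
            (Submodule.subset_span (Or.inl ⟨m, hm_cls, rfl⟩))
      · exact absurd hV hzV
  · exact Submodule.span_le.mpr
      (le_trans Set.subset_union_left Submodule.subset_span)

end QMBasis

namespace QMBasis

variable {F : Type} [Field F] {G : Type} [AddCommGroup G] [DecidableEq G]
    {L : Type} [AddCommGroup L] [Module F L] {n : ℕ} {I : Type}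
    {A : ColorGLT F G L n} (B : QMBasis A I)

/-- One-level glt expansion: `⟨⟨e_{[w]}⟩, …⟩` with an `e_{[u]}` among the other
arguments vanishes. -/
lemma LC {u w : I} (huw : B.cls u ≠ B.cls w) (k : Fin (n + 2))
    (c' : Fin (n + 2) → I) (hc' : ∀ t, c' t ∈ B.cls w)
    (y : Fin (n + 1) → L) (p : Fin (n + 1)) {j : I} (hj : j ∈ B.cls u)
    (hyp : y p = B.e j) (hy : ∀ t, B.HomogElem (y t)) :
    A.bracket (Fin.insertNth k (A.bracket (fun t => B.e (c' t))) y) = 0 := by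
  classical
  choose gy hgy using fun t => (hy t).1
  rw [A.glt k (fun t => B.deg (c' t)) gy (fun t => B.e (c' t)) y
    (fun t => B.e_homog (c' t)) hgy]
  refine Finset.sum_eq_zero fun i0 _ => Finset.sum_eq_zero fun j0 _ =>
    Finset.sum_eq_zero fun σ₁ _ => Finset.sum_eq_zero fun σ₂ _ => ?_
  choose o ho using fun t => B.elem_code (hy t).2
  have hop : o p = some j := B.code_eq (ho p) hyp
  have hinner : A.bracket (Fin.insertNth j0 (B.e (c' (σ₁ i0))) (fun t => y (σ₂ t))) = 0 := by
    refine B.LB (u := w) (w := u) (Ne.symm huw)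
      (c := Fin.insertNth j0 (some (c' (σ₁ i0))) (fun t => o (σ₂ t)))
      (a := j0) (b := j0.succAbove (σ₂⁻¹ p))
      ?_ (Ne.symm (Fin.succAbove_ne j0 _)) ?_ ?_ (hc' (σ₁ i0)) hj
    · intro t
      refine Fin.succAboveCases j0 ?_ ?_ t
      · rw [Fin.insertNth_apply_same, Fin.insertNth_apply_same]
        rfl
      · intro s
        rw [Fin.insertNth_apply_succAbove, Fin.insertNth_apply_succAbove]
        exact ho (σ₂ s)
    · rw [Fin.insertNth_apply_same]
    · rw [Fin.insertNth_apply_succAbove]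
      rw [show σ₂ (σ₂⁻¹ p) = p from Equiv.apply_symm_apply σ₂ p]
      exact hop
  simp only [hinner, MultilinearMap.map_update_zero, smul_zero]

/-- Two-level glt expansion: `⟨⟨e_{[u]}⟩, ⟨e_{[w]}⟩, …⟩` vanishes. -/
lemma LD {u w : I} (huw : B.cls u ≠ B.cls w) (k : Fin (n + 2))
    (c : Fin (n + 2) → I) (hc : ∀ t, c t ∈ B.cls u)
    (y : Fin (n + 1) → L) (p : Fin (n + 1)) (c' : Fin (n + 2) → I)
    (hc' : ∀ t, c' t ∈ B.cls w)
    (hyp : y p = A.bracket (fun t => B.e (c' t)))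
    (hy : ∀ t, t ≠ p → B.HomogElem (y t)) :
    A.bracket (Fin.insertNth k (A.bracket (fun t => B.e (c t))) y) = 0 := by
  classical
  have hgy : ∀ t, ∃ g, y t ∈ A.grading g := by
    intro t
    by_cases htp : t = p
    · subst htp
      rw [hyp]
      exact ⟨_, A.bracket_graded (fun t => B.deg (c' t)) _ (fun t => B.e_homog _)⟩
    · exact (hy t htp).1
  choose gy hgy' using hgy
  rw [A.glt k (fun t => B.deg (c t)) gy (fun t => B.e (c t)) y
    (fun t => B.e_homog (c t)) hgy']
  refine Finset.sum_eq_zero fun i0 _ => Finset.sum_eq_zero fun j0 _ =>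
    Finset.sum_eq_zero fun σ₁ _ => Finset.sum_eq_zero fun σ₂ _ => ?_
  set Z : Fin (n + 2) → L := Fin.insertNth j0 (B.e (c (σ₁ i0))) (fun t => y (σ₂ t)) with hZ
  set q : Fin (n + 2) := j0.succAbove (σ₂⁻¹ p) with hq
  have hZq : Z q = A.bracket (fun t => B.e (c' t)) := by
    rw [hZ, hq, Fin.insertNth_apply_succAbove,
      show σ₂ (σ₂⁻¹ p) = p from Equiv.apply_symm_apply σ₂ p, hyp]
  have hinner : A.bracket Z = 0 := by
    have hrepr : A.bracket Z = A.bracket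
        (Fin.insertNth q (A.bracket (fun t => B.e (c' t))) (Fin.removeNth q Z)) := by
      rw [← hZq, Fin.insertNth_self_removeNth]
    rw [hrepr]
    have hj0q : j0 ≠ q := Ne.symm (Fin.succAbove_ne j0 _)
    obtain ⟨p', hp'⟩ := Fin.exists_succAbove_eq hj0q
    refine B.LC huw q c' hc' (Fin.removeNth q Z) p' (hc (σ₁ i0)) ?_ ?_
    · show Z (q.succAbove p') = B.e (c (σ₁ i0))
      rw [hp', hZ, Fin.insertNth_apply_same]
    · intro t
      show B.HomogElem (Z (q.succAbove t))
      have hne1 : q.succAbove t ≠ q := Fin.succAbove_ne q t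
      by_cases h1 : q.succAbove t = j0
      · rw [h1, hZ, Fin.insertNth_apply_same]
        exact ⟨⟨_, B.e_homog _⟩, Or.inr ⟨_, rfl⟩⟩
      · obtain ⟨s, hs⟩ := Fin.exists_succAbove_eq h1
        rw [← hs, hZ, Fin.insertNth_apply_succAbove]
        refine hy (σ₂ s) ?_
        intro hsp
        apply hne1
        have hs' : s = σ₂⁻¹ p := by rw [← hsp]; simp
        rw [← hs, hs', hq]
  simp only [hinner, MultilinearMap.map_update_zero, smul_zero]

end QMBasis

theorem stmt7 {F : Type} [Field F] {G : Type} [AddCommGroup G] [DecidableEq G]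
    {L : Type} [AddCommGroup L] [Module F L] {n : ℕ} {I : Type}
    {A : ColorGLT F G L n} (B : QMBasis A I) (i h : I) (hne : B.cls i ≠ B.cls h)
    (σ : Equiv.Perm (Fin (n + 2))) (x : Fin (n + 2) → L)
    (h0 : x 0 ∈ B.Jcls i) (h1 : x 1 ∈ B.Jcls h) :
    A.bracket (fun t => x (σ t)) = 0 := by
  classical
  open QMBasis in
  have hab : σ.symm 0 ≠ σ.symm 1 := by
    intro hEq
    have h01 := σ.symm.injective hEq
    have hv : (0 : Fin (n + 2)).val = (1 : Fin (n + 2)).val := congrArg Fin.val h01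
    simp [Fin.val_one] at hv
  set a : Fin (n + 2) := σ.symm 0 with haa
  set b : Fin (n + 2) := σ.symm 1 with hbb
  set E : Set L := (⋃ g : G, ((B.V ⊓ A.grading g : Submodule F L) : Set L))
    ∪ Set.range B.e with hE
  have hEhom : ∀ w ∈ E, B.HomogElem w := by
    rintro w (hw | ⟨m, rfl⟩)
    · obtain ⟨g, hg⟩ := Set.mem_iUnion.mp hw
      exact ⟨⟨g, hg.2⟩, Or.inl hg.1⟩
    · exact ⟨⟨_, B.e_homog m⟩, Or.inr ⟨m, rfl⟩⟩
  have hEtop : Submodule.span F E = ⊤ := by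
    rw [eq_top_iff, ← B.compl.sup_eq_top]
    apply sup_le
    · refine le_trans (le_of_eq B.V_graded) (iSup_le fun g => ?_)
      intro w hw
      exact Submodule.subset_span (Or.inl (Set.mem_iUnion.mpr ⟨g, hw⟩))
    · rw [← B.e_span]
      exact Submodule.span_le.mpr
        (le_trans Set.subset_union_right Submodule.subset_span)
  set s : Fin (n + 2) → Set L :=
    fun t => if t = a then B.TS i else if t = b then B.TS h else E with hs
  have core : ∀ z : Fin (n + 2) → L, (∀ t, z t ∈ s t) → A.bracket z = 0 := by
    intro z hz
    have hza : z a ∈ B.TS i := by simpa [hs] using hz a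
    have hzb : z b ∈ B.TS h := by simpa [hs, Ne.symm hab] using hz b
    have hzo : ∀ t, t ≠ a → t ≠ b → B.HomogElem (z t) := by
      intro t ht1 ht2
      refine hEhom _ ?_
      simpa [hs, ht1, ht2] using hz t
    rcases hza with ⟨j, hj, hej⟩ | ⟨⟨c, hc, hcz⟩, hzV⟩
    · rcases hzb with ⟨kk, hkk, hek⟩ | ⟨⟨c', hc', hcz'⟩, hzV'⟩
      · have hcode : ∀ t, ∃ o : Option I, z t ∈ B.elemSet o := by
          intro t
          by_cases ht1 : t = a
          · subst ht1; exact ⟨some j, hej.symm⟩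
          · by_cases ht2 : t = b
            · subst ht2; exact ⟨some kk, hek.symm⟩
            · exact B.elem_code (hzo t ht1 ht2).2
        choose o ho using hcode
        have hoa : o a = some j := B.code_eq (ho a) hej.symm
        have hob : o b = some kk := B.code_eq (ho b) hek.symm
        exact B.LB hne ho hab hoa hob hj hkk
      · obtain ⟨p, hp⟩ := Fin.exists_succAbove_eq hab
        have hrepr : A.bracket z = A.bracket
            (Fin.insertNth b (A.bracket (fun t => B.e (c' t))) (Fin.removeNth b z)) := by
          rw [← hcz', Fin.insertNth_self_removeNth]
        rw [hrepr]
        refine B.LC hne b c' hc' (Fin.removeNth b z) p hj ?_ ?_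
        · show z (b.succAbove p) = B.e j
          rw [hp, ← hej]
        · intro t
          show B.HomogElem (z (b.succAbove t))
          by_cases hta : b.succAbove t = a
          · rw [hta, ← hej]
            exact ⟨⟨_, B.e_homog j⟩, Or.inr ⟨j, rfl⟩⟩
          · exact hzo _ hta (Fin.succAbove_ne b t)
    · rcases hzb with ⟨kk, hkk, hek⟩ | ⟨⟨c', hc', hcz'⟩, hzV'⟩
      · obtain ⟨p, hp⟩ := Fin.exists_succAbove_eq (Ne.symm hab)
        have hrepr : A.bracket z = A.bracket
            (Fin.insertNth a (A.bracket (fun t => B.e (c t))) (Fin.removeNth a z)) := by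
          rw [← hcz, Fin.insertNth_self_removeNth]
        rw [hrepr]
        refine B.LC (Ne.symm hne) a c hc (Fin.removeNth a z) p hkk ?_ ?_
        · show z (a.succAbove p) = B.e kk
          rw [hp, ← hek]
        · intro t
          show B.HomogElem (z (a.succAbove t))
          by_cases htb : a.succAbove t = b
          · rw [htb, ← hek]
            exact ⟨⟨_, B.e_homog kk⟩, Or.inr ⟨kk, rfl⟩⟩
          · exact hzo _ (Fin.succAbove_ne a t) htb
      · obtain ⟨p, hp⟩ := Fin.exists_succAbove_eq (Ne.symm hab)
        have hrepr : A.bracket z = A.bracket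
            (Fin.insertNth a (A.bracket (fun t => B.e (c t))) (Fin.removeNth a z)) := by
          rw [← hcz, Fin.insertNth_self_removeNth]
        rw [hrepr]
        refine B.LD hne a c hc (Fin.removeNth a z) p c' hc' ?_ ?_
        · show z (a.succAbove p) = _
          rw [hp]; exact hcz'
        · intro t htp
          show B.HomogElem (z (a.succAbove t))
          refine hzo _ (Fin.succAbove_ne a t) ?_
          intro htb
          exact htp (Fin.succAbove_right_injective (htb.trans hp.symm))
  refine QMBasis.multi_zero A.bracket s core (fun t => x (σ t)) ?_
  intro t
  show x (σ t) ∈ Submodule.span F (s t)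
  by_cases ht1 : t = a
  · have hst : s t = B.TS i := by simp [hs, ht1]
    have hσ : σ t = 0 := by rw [ht1, haa, Equiv.apply_symm_apply]
    rw [hst, hσ]
    exact B.Jcls_le_span i h0
  · by_cases ht2 : t = b
    · have hst : s t = B.TS h := by simp [hs, ht1, ht2, Ne.symm hab]
      have hσ : σ t = 1 := by rw [ht2, hbb, Equiv.apply_symm_apply]
      rw [hst, hσ]
      exact B.Jcls_le_span h h1
    · have hst : s t = E := by simp [hs, ht1, ht2]
      rw [hst, hEtop]
      exact Submodule.mem_top
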